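/- Let R be a binary relation on a type α and init, err : α → Prop, and let b ∈ ℕ. Suppose (i) there is no f : Fin (b + 1) → α with init (f 0) and R (f i.castSucc) (f i.succ) for all i : Fin b (no run of length b from an initial state), and (ii) for every k < b there is no f : Fin (k + 1) → α with init (f 0), R (f i.castSucc) (f i.succ) for all i : Fin k, and err (f (Fin.last k)) (no counterexample of length < b). Then for all s, t ∈ α with init s and Relation.ReflTransGen R s t, err t does not hold. (Soundness of BMC's 'safe' answer: if the unrolling of length b is unsatisfiable and no error state was found at smaller bounds, the safety problem is safe.) -/

import Mathlib

lemma exists_run {α : Type*} {R : α → α → Prop} {s t : α}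
    (h : Relation.ReflTransGen R s t) :
    ∃ n : ℕ, ∃ f : Fin (n + 1) → α, f 0 = s ∧ f (Fin.last n) = t ∧
      ∀ i : Fin n, R (f i.castSucc) (f i.succ) := by
  induction h with
  | refl => exact ⟨0, fun _ => s, rfl, rfl, fun i => i.elim0⟩
  | tail _ hR ih =>
    obtain ⟨n, f, h0, hl, hstep⟩ := ih
    rename_i u v _
    refine ⟨n + 1, Fin.snoc f v, by rw [show (0:Fin (n+2)) = Fin.castSucc 0 from rfl, Fin.snoc_castSucc]; exact h0, by simp, fun i => ?_⟩
    refine i.lastCases ?_ (fun j => ?_)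
    · have : (Fin.last n).succ = Fin.last (n + 1) := rfl
      simpa [this, Fin.snoc_castSucc, hl] using hR
    · have h1 : (j.castSucc.succ : Fin (n + 2)) = (j.succ).castSucc := rfl
      simp only [h1, Fin.snoc_castSucc]
      exact hstep j

theorem stmt_10 {α : Type*} (R : α → α → Prop) (init err : α → Prop) (b : ℕ)
    (h₁ : ¬ ∃ f : Fin (b + 1) → α,
      init (f 0) ∧ ∀ i : Fin b, R (f i.castSucc) (f i.succ))
    (h₂ : ∀ k < b, ¬ ∃ f : Fin (k + 1) → α,
      init (f 0) ∧ (∀ i : Fin k, R (f i.castSucc) (f i.succ)) ∧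
      err (f (Fin.last k))) :
    ∀ s t : α, init s → Relation.ReflTransGen R s t → ¬ err t := by
  intro s t hs hst het
  obtain ⟨n, f, h0, hl, hstep⟩ := exists_run hst
  rcases lt_or_ge n b with hn | hn
  · exact h₂ n hn ⟨f, h0 ▸ hs, hstep, hl ▸ het⟩
  · apply h₁
    refine ⟨fun i => f (Fin.castLE (by omega) i), ?_, fun i => ?_⟩
    · simpa [Fin.castLE] using h0 ▸ hs
    · have := hstep ⟨i, by omega⟩
      convert this using 2 <;> ext <;> simp
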